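/- For every integer l ≥ 1 there exists a sentence φ_l in the first-order language of rings such that, for every commutative ring R (regarded as a structure for the language of rings in the canonical way), R satisfies φ_l if and only if R is an Artinian local ring whose length is at most l. Likewise, there exists a sentence φ'_l whose models among commutative rings are exactly the Artinian local rings of length exactly l. -/

import Mathlib

open FirstOrder Language

/-- The length of a commutative ring as a module over itself, i.e. the supremum of the
lengths of strictly increasing chains of ideals (Krull dimension of the ideal lattice). -/
noncomputable def ringLength (R : Type*) [CommRing R] : WithBot ℕ∞ :=
  Order.krullDim (Ideal R)


namespace StmtAux

open FirstOrder.Ring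

variable {R : Type*}

/-- Sum of a tuple of ring terms. -/
def termSum {α : Type*} : ∀ (k : ℕ), (Fin k → Language.ring.Term α) → Language.ring.Term α
  | 0, _ => 0
  | k + 1, t => termSum k (fun i => t i.castSucc) + t (Fin.last k)

lemma realize_termSum [CommRing R] [FirstOrder.Ring.CompatibleRing R] {α : Type*}
    (k : ℕ) (t : Fin k → Language.ring.Term α) (v : α → R) :
    Term.realize v (termSum k t) = ∑ i, Term.realize v (t i) := by
  induction k with
  | zero => simp [termSum]
  | succ k ih => rw [termSum, Fin.sum_univ_castSucc, ← ih (fun i => t i.castSucc)]; simp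

/-- Formula (with free variables `Sum.inl (Sum.inr j)` for `j : Fin n`) saying that
`x k` lies in the ideal generated by `x i` for `i < k`. -/
noncomputable def memSpanF (n : ℕ) (k : Fin n) : Language.ring.Formula (Empty ⊕ Fin n) :=
  Formula.iExs (Fin k.val)
    (Term.equal (Term.var (Sum.inl (Sum.inr k)))
      (termSum k.val fun i =>
        Term.var (Sum.inr i) * Term.var (Sum.inl (Sum.inr (Fin.castLE k.isLt.le i)))) :
      Language.ring.Formula ((Empty ⊕ Fin n) ⊕ Fin k.val))

/-- Sentence asserting the existence of `x 0, ..., x (n-1)` with each `x k` outside the ideal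
generated by the previous ones. -/
noncomputable def chainS (n : ℕ) : Language.ring.Sentence :=
  Formula.iExs (Fin n)
    (BoundedFormula.iInf fun k : Fin n => ∼(memSpanF n k))

/-- The chain condition as a `Prop`. -/
def ChainCond (R : Type*) [CommRing R] (n : ℕ) : Prop :=
  ∃ x : Fin n → R, ∀ k : Fin n,
    x k ∉ Ideal.span (Set.range fun i : Fin k.val => x (Fin.castLE k.isLt.le i))

lemma realize_chainS [CommRing R] [FirstOrder.Ring.CompatibleRing R] (n : ℕ) :
    (chainS n).Realize R ↔ ChainCond R n := by
  simp only [chainS, Sentence.Realize, Formula.realize_iExs, BoundedFormula.realize_iExs,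
    id_eq, Formula.Realize, BoundedFormula.realize_iInf, Finset.mem_univ, true_implies,
    BoundedFormula.realize_not, memSpanF]
  refine exists_congr fun x => forall_congr' fun k => not_congr ?_
  rw [Ideal.mem_span_range_iff_exists_fun]
  simp only [Formula.realize_iExs, BoundedFormula.realize_iExs, id_eq, Formula.realize_equal,
    Formula.Realize, BoundedFormula.realize_bdEqual, Term.realize_relabel, Term.realize_var,
    Term.equal, realize_termSum, Ring.realize_mul, Sum.elim_inl, Sum.elim_inr, Function.comp,
    eq_comm]

end StmtAux

namespace StmtAux

open FirstOrder.Ring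

lemma chainCond_iff_le_krullDim (R : Type*) [CommRing R] (n : ℕ) :
    ChainCond R n ↔ ((n : ℕ∞) : WithBot ℕ∞) ≤ Order.krullDim (Ideal R) := by
  constructor
  · rintro ⟨x, hx⟩
    have hstep : ∀ i : Fin n,
        Ideal.span (x '' {j : Fin n | (j : ℕ) < (i : ℕ)}) <
          Ideal.span (x '' {j : Fin n | (j : ℕ) < (i : ℕ) + 1}) := by
      intro i
      refine lt_of_le_not_ge (Ideal.span_mono (Set.image_mono fun j hj => ?_)) fun hge => ?_
      · exact Nat.lt_succ_of_lt hj
      · refine hx i ?_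
        have hx_mem : x i ∈ Ideal.span (x '' {j : Fin n | (j : ℕ) < (i : ℕ) + 1}) :=
          Ideal.subset_span ⟨i, Nat.lt_succ_self _, rfl⟩
        have : x i ∈ Ideal.span (x '' {j : Fin n | (j : ℕ) < (i : ℕ)}) := hge hx_mem
        convert this using 2
        ext y
        constructor
        · rintro ⟨j, rfl⟩
          exact ⟨Fin.castLE i.isLt.le j, j.isLt, rfl⟩
        · rintro ⟨j, hj, rfl⟩
          exact ⟨⟨(j : ℕ), hj⟩, rfl⟩
    let p : LTSeries (Ideal R) :=
      ⟨n, fun j => Ideal.span (x '' {i : Fin n | (i : ℕ) < (j : ℕ)}), fun i => hstep i⟩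
    have hlen := Order.LTSeries.length_le_krullDim p
    have hplen : p.length = n := rfl
    rw [hplen] at hlen
    exact le_trans (le_of_eq (by exact_mod_cast rfl)) hlen
  · intro h
    rcases Nat.eq_zero_or_pos n with rfl | hn
    · exact ⟨fun i => i.elim0, fun k => k.elim0⟩
    by_cases hex : ∃ p : LTSeries (Ideal R), n ≤ p.length
    · obtain ⟨p, hp⟩ := hex
      have hlt : ∀ k : Fin n,
          p ⟨(k : ℕ), by omega⟩ < p ⟨(k : ℕ) + 1, by have := k.isLt; omega⟩ := fun k =>
        p.strictMono (by simp [Fin.lt_def])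
      choose y hy₁ hy₂ using fun k => SetLike.exists_of_lt (hlt k)
      refine ⟨y, fun k => fun hk => hy₂ k ?_⟩
      have hsub : Ideal.span (Set.range fun i : Fin k.val => y (Fin.castLE k.isLt.le i)) ≤
          p ⟨(k : ℕ), by have := k.isLt; omega⟩ := by
        rw [Ideal.span_le]
        rintro _ ⟨i, rfl⟩
        have h1 : y (Fin.castLE k.isLt.le i) ∈
            p ⟨(i : ℕ) + 1, by have := k.isLt; have := i.isLt; omega⟩ := by
          simpa using hy₁ (Fin.castLE k.isLt.le i)
        exact p.monotone (by simp [Fin.le_def]) h1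
      exact hsub hk
    · exfalso
      push_neg at hex
      have hbd : Order.krullDim (Ideal R) ≤ ((n - 1 : ℕ) : WithBot ℕ∞) := by
        rw [Order.krullDim]
        refine iSup_le fun p => ?_
        have hp := hex p
        have hle : p.length ≤ n - 1 := by omega
        exact_mod_cast hle
      have h2 : ((n : ℕ∞) : WithBot ℕ∞) ≤ ((n - 1 : ℕ) : WithBot ℕ∞) := le_trans h hbd
      generalize hm : n - 1 = m at h2
      norm_cast at h2
      omega

end StmtAux

namespace StmtAux

open FirstOrder.Ring

lemma isArtinianRing_of_krullDim_le (R : Type*) [CommRing R] {l : ℕ}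
    (h : Order.krullDim (Ideal R) ≤ ((l : ℕ∞) : WithBot ℕ∞)) : IsArtinianRing R := by
  have : IsArtinian R R := by
    rw [isArtinian_iff, RelEmbedding.wellFounded_iff_isEmpty]
    constructor
    intro f
    have hmap : ∀ {a b : ℕ}, a > b → f a < f b := fun hab => f.map_rel_iff.mpr hab
    let p : LTSeries (Ideal R) :=
      ⟨l + 1, fun j => f (l + 1 - (j : ℕ)), fun i => by
        refine hmap ?_
        have := i.isLt
        simp only [Fin.coe_castSucc, Fin.val_succ]
        omega⟩
    have hlen := Order.LTSeries.length_le_krullDim p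
    have hplen : p.length = l + 1 := rfl
    rw [hplen] at hlen
    have h2 : ((l + 1 : ℕ) : WithBot ℕ∞) ≤ ((l : ℕ) : WithBot ℕ∞) := by
      refine le_trans hlen (le_trans h ?_)
      exact le_of_eq (by exact_mod_cast rfl)
    norm_cast at h2
    omega
  exact this

/-- sentence : `0 ≠ 1`. -/
noncomputable def nontrivS : Language.ring.Sentence :=
  ∼(Term.equal (0 : Language.ring.Term Empty) 1)

/-- sentence : every element or its complement to 1 is a unit. -/
noncomputable def localS : Language.ring.Sentence :=
  Formula.iAlls Unit
    ((Formula.iExs Unit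
        (Term.equal (Term.var (Sum.inl (Sum.inr ())) * Term.var (Sum.inr ())) 1 :
          Language.ring.Formula ((Empty ⊕ Unit) ⊕ Unit))) ⊔
     (Formula.iExs Unit
        (Term.equal ((1 + -Term.var (Sum.inl (Sum.inr ()))) * Term.var (Sum.inr ())) 1 :
          Language.ring.Formula ((Empty ⊕ Unit) ⊕ Unit))))

variable {R : Type*}

lemma realize_nontrivS [CommRing R] [FirstOrder.Ring.CompatibleRing R] :
    nontrivS.Realize R ↔ Nontrivial R := by
  simp only [nontrivS, Sentence.Realize, Formula.realize_not, Formula.realize_equal,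
    Ring.realize_zero, Ring.realize_one]
  exact ⟨fun h => nontrivial_of_ne 0 1 h, fun h => zero_ne_one⟩

lemma realize_localS [CommRing R] [FirstOrder.Ring.CompatibleRing R] :
    localS.Realize R ↔ ∀ a : R, IsUnit a ∨ IsUnit (1 - a) := by
  simp only [localS, Sentence.Realize, Formula.realize_iAlls, BoundedFormula.realize_iAlls,
    Formula.realize_iExs, id_eq,
    Formula.Realize, BoundedFormula.realize_sup, BoundedFormula.realize_iExs,
    Formula.realize_equal, Term.equal, Term.realize_relabel, BoundedFormula.realize_bdEqual,
    Ring.realize_mul, Ring.realize_add, Ring.realize_neg, Ring.realize_one, Term.realize_var,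
    Function.comp, Sum.elim_inl, Sum.elim_inr]
  constructor
  · intro h a
    rcases h (fun _ => a) with ⟨y, hy⟩ | ⟨y, hy⟩
    · exact Or.inl (isUnit_iff_exists_inv.mpr ⟨y (), by simpa using hy⟩)
    · refine Or.inr (isUnit_iff_exists_inv.mpr ⟨y (), ?_⟩)
      rw [sub_eq_add_neg]
      simpa using hy
  · intro h a
    rcases h (a ()) with ha | ha
    · obtain ⟨y, hy⟩ := isUnit_iff_exists_inv.mp ha
      exact Or.inl ⟨fun _ => y, by simpa using hy⟩
    · obtain ⟨y, hy⟩ := isUnit_iff_exists_inv.mp ha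
      refine Or.inr ⟨fun _ => y, ?_⟩
      rw [sub_eq_add_neg] at hy
      simpa using hy

end StmtAux

namespace StmtAux

lemma not_chainCond_iff (R : Type*) [CommRing R] (l : ℕ) :
    ¬ ChainCond R (l + 1) ↔ Order.krullDim (Ideal R) ≤ ((l : ℕ∞) : WithBot ℕ∞) := by
  rw [chainCond_iff_le_krullDim, not_le]
  cases hd : Order.krullDim (Ideal R) with
  | bot => simp [bot_lt_iff_ne_bot, WithBot.add_eq_bot]
  | coe m =>
    rw [WithBot.coe_lt_coe, WithBot.coe_le_coe,
      show (((l + 1 : ℕ)) : ℕ∞) = (l : ℕ∞) + 1 by push_cast; ring,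
      ENat.lt_add_one_iff (by simp)]

lemma main_le_iff (R : Type*) [CommRing R] (l : ℕ) :
    (Nontrivial R ∧ (∀ a : R, IsUnit a ∨ IsUnit (1 - a)) ∧
        Order.krullDim (Ideal R) ≤ ((l : ℕ∞) : WithBot ℕ∞)) ↔
      (IsArtinianRing R ∧ IsLocalRing R ∧
        Order.krullDim (Ideal R) ≤ ((l : ℕ∞) : WithBot ℕ∞)) := by
  constructor
  · rintro ⟨h1, h2, h3⟩
    haveI := h1
    exact ⟨isArtinianRing_of_krullDim_le R h3,
      IsLocalRing.of_isUnit_or_isUnit_one_sub_self h2, h3⟩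
  · rintro ⟨h1, h2, h3⟩
    haveI := h2
    exact ⟨inferInstance, IsLocalRing.isUnit_or_isUnit_one_sub_self, h3⟩

end StmtAux

open StmtAux in
theorem stmt_0' (l : ℕ) (_hl : 1 ≤ l) :
    (∃ φ : Language.ring.Sentence, ∀ (R : Type*) [CommRing R],
      (letI := FirstOrder.Ring.compatibleRingOfRing R; R ⊨ φ) ↔
        (IsArtinianRing R ∧ IsLocalRing R ∧
          Order.krullDim (Ideal R) ≤ ((l : ℕ∞) : WithBot ℕ∞))) ∧
    (∃ φ' : Language.ring.Sentence, ∀ (R : Type*) [CommRing R],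
      (letI := FirstOrder.Ring.compatibleRingOfRing R; R ⊨ φ') ↔
        (IsArtinianRing R ∧ IsLocalRing R ∧
          Order.krullDim (Ideal R) = ((l : ℕ∞) : WithBot ℕ∞))) := by
  constructor
  · refine ⟨nontrivS ⊓ (localS ⊓ ∼(chainS (l + 1))), fun R _ => ?_⟩
    letI := FirstOrder.Ring.compatibleRingOfRing R
    have hsplit : R ⊨ (nontrivS ⊓ (localS ⊓ ∼(chainS (l + 1)))) ↔
        (nontrivS.Realize R ∧ localS.Realize R ∧ ¬ (chainS (l + 1)).Realize R) := by
      simp only [Sentence.Realize, Formula.Realize, BoundedFormula.realize_inf,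
        BoundedFormula.realize_not]
    rw [hsplit, realize_nontrivS, realize_localS, realize_chainS, not_chainCond_iff]
    exact main_le_iff R l
  · refine ⟨(nontrivS ⊓ (localS ⊓ ∼(chainS (l + 1)))) ⊓ chainS l, fun R _ => ?_⟩
    letI := FirstOrder.Ring.compatibleRingOfRing R
    have hsplit : R ⊨ ((nontrivS ⊓ (localS ⊓ ∼(chainS (l + 1)))) ⊓ chainS l) ↔
        ((nontrivS.Realize R ∧ localS.Realize R ∧ ¬ (chainS (l + 1)).Realize R) ∧
          (chainS l).Realize R) := by
      simp only [Sentence.Realize, Formula.Realize, BoundedFormula.realize_inf,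
        BoundedFormula.realize_not]
    rw [hsplit, realize_nontrivS, realize_localS, realize_chainS, realize_chainS,
      not_chainCond_iff, chainCond_iff_le_krullDim, main_le_iff]
    constructor
    · rintro ⟨⟨h1, h2, h3⟩, h4⟩
      exact ⟨h1, h2, le_antisymm h3 h4⟩
    · rintro ⟨h1, h2, h3⟩
      exact ⟨⟨h1, h2, le_of_eq h3⟩, ge_of_eq h3⟩


/-- For every `l ≥ 1` there is a first-order sentence in the language of rings whose models
among commutative rings are exactly the Artinian local rings of length at most `l`, and
likewise a sentence for the Artinian local rings of length exactly `l`. -/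
theorem stmt_0 (l : ℕ) (hl : 1 ≤ l) :
    (∃ φ : Language.ring.Sentence, ∀ (R : Type*) [CommRing R],
      (letI := FirstOrder.Ring.compatibleRingOfRing R; R ⊨ φ) ↔
        (IsArtinianRing R ∧ IsLocalRing R ∧ ringLength R ≤ ((l : ℕ∞) : WithBot ℕ∞))) ∧
    (∃ φ' : Language.ring.Sentence, ∀ (R : Type*) [CommRing R],
      (letI := FirstOrder.Ring.compatibleRingOfRing R; R ⊨ φ') ↔
        (IsArtinianRing R ∧ IsLocalRing R ∧ ringLength R = ((l : ℕ∞) : WithBot ℕ∞))) := by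
  have h := stmt_0' l hl
  simpa only [ringLength] using h
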